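/- In the canonical ensemble for the perfect Bose gas, the Laplace transform of the occupation number of level k satisfies the identity ⟨exp(−λN_k)⟩_V^C(n/V) = e^λ − (e^λ − 1)·Z_V(n)^{-1}·Σ_{m=0}^{n} e^{−(βE_k+λ)(n−m)} Z_V(m), for all λ ∈ ℝ and n ≥ 0. -/

import Mathlib

/-! ### Auxiliary machinery -/

noncomputable def wgt (β : ℝ) (E : ℕ → ℝ) (f : ℕ →₀ ℕ) : ℝ :=
  Real.exp (-β * f.sum fun k m => (m : ℝ) * E k)

lemma wgt_pos (β : ℝ) (E : ℕ → ℝ) (f : ℕ →₀ ℕ) : 0 < wgt β E f := Real.exp_pos _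

/-! #### Algebraic recursion lemmas for finite sums -/

lemma rec1 (c : ℝ) (Y : ℕ → ℝ) (n : ℕ) :
    ∑ j ∈ Finset.range (n+2), c^j * Y (n+1-j)
      = Y (n+1) + c * ∑ j ∈ Finset.range (n+1), c^j * Y (n-j) := by
  rw [Finset.sum_range_succ' (fun j => c^j * Y (n+1-j)) (n+1), Finset.mul_sum, add_comm]
  simp only [Nat.succ_sub_succ, pow_succ, pow_zero, one_mul, Nat.sub_zero]
  congr 1
  exact Finset.sum_congr rfl (fun i _ => by ring)

lemma rec2 (q : ℝ) (Z : ℕ → ℝ) (n : ℕ) :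
    ∑ m ∈ Finset.range (n+2), q^(n+1-m) * Z m
      = Z (n+1) + q * ∑ m ∈ Finset.range (n+1), q^(n-m) * Z m := by
  rw [Finset.sum_range_succ, Finset.mul_sum, add_comm]
  congr 1
  · simp
  · refine Finset.sum_congr rfl fun m hm => ?_
    rw [Nat.succ_sub (Finset.mem_range_succ_iff.mp hm), pow_succ]; ring

lemma alg (Y : ℕ → ℝ) (a q el : ℝ) (ha : a = q * el) (n : ℕ) :
    ∑ j ∈ Finset.range (n+1), q^j * Y (n-j)
      = el * (∑ i ∈ Finset.range (n+1), a^i * Y (n-i))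
        - (el - 1) * ∑ m ∈ Finset.range (n+1),
            q^(n-m) * ∑ i ∈ Finset.range (m+1), a^i * Y (m-i) := by
  induction n with
  | zero => simp; ring
  | succ n ih =>
    rw [rec1 q Y n, rec2 q _ n, rec1 a Y n, ih, ha]
    ring

/-! #### Multiset expression for the weight -/

lemma finsuppSum_eq (E : ℕ → ℝ) (f : ℕ →₀ ℕ) :
    f.sum (fun k m => (m : ℝ) * E k) = ((Finsupp.toMultiset f).map E).sum := by
  induction f using Finsupp.induction with
  | zero => simp
  | single_add a b f ha hb ih =>
    rw [Finsupp.sum_add_index' (by simp) (by push_cast; intros; ring)]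
    rw [map_add, Multiset.map_add, Multiset.sum_add, ih,
        Finsupp.toMultiset_single, Finsupp.sum_single_index (by simp)]
    simp [Multiset.map_nsmul, Multiset.sum_nsmul, mul_comm]

lemma wgt_eq_prod (β : ℝ) (E : ℕ → ℝ) (f : ℕ →₀ ℕ) :
    wgt β E f = ((Finsupp.toMultiset f).map (fun a => Real.exp (-β * E a))).prod := by
  rw [wgt, finsuppSum_eq]
  have : -β * ((Finsupp.toMultiset f).map E).sum
      = ((Finsupp.toMultiset f).map (fun a => -β * E a)).sum := by
    rw [← Multiset.sum_map_mul_left]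
  rw [this, Real.exp_multiset_sum, Multiset.map_map]
  rfl

/-! #### List lemmas -/

lemma list_prod_eq (l : List ℕ) (n : ℕ) (hl : l.length = n) (h : ℕ → ℝ) :
    (l.map h).prod = ∏ i : Fin n, h (l.getD i 0) := by
  subst hl
  rw [← List.ofFn_getElem_eq_map l h, List.prod_ofFn]
  refine Finset.prod_congr rfl fun i _ => ?_
  rw [List.getD_eq_getElem l 0 (by exact i.isLt)]

lemma list_inj (l l' : List ℕ) (n : ℕ) (hl : l.length = n) (hl' : l'.length = n)
    (h : ∀ i : Fin n, l.getD i 0 = l'.getD i 0) : l = l' := by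
  subst hl
  apply List.ext_getElem (hl'.symm)
  intro i h1 h2
  have := h ⟨i, h1⟩
  rwa [List.getD_eq_getElem l 0 h1, List.getD_eq_getElem l' 0 h2] at this

/-! #### Summability -/

lemma summable_pi (r : ℕ → ℝ) (hr : ∀ a, 0 ≤ r a) (hsum : Summable r) :
    ∀ n, Summable (fun v : Fin n → ℕ => ∏ i, r (v i)) := by
  intro n
  induction n with
  | zero => exact .of_finite
  | succ n ih =>
    have key : Summable (fun p : ℕ × (Fin n → ℕ) => r p.1 * ∏ i, r (p.2 i)) :=
      Summable.mul_of_nonneg (f := r) (g := fun v : Fin n → ℕ => ∏ i, r (v i))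
        hsum ih (fun a => hr a) (fun v => Finset.prod_nonneg fun i _ => hr _)
    refine ((Fin.consEquiv (fun _ : Fin (n+1) => ℕ)).summable_iff).mp ?_
    have : ((fun v : Fin (n+1) → ℕ => ∏ i, r (v i)) ∘ (Fin.consEquiv (fun _ => ℕ)))
        = fun p : ℕ × (Fin n → ℕ) => r p.1 * ∏ i, r (p.2 i) := by
      funext p
      simp [Fin.consEquiv, Fin.prod_univ_succ]
    rw [this]
    exact key

noncomputable def slist (f : ℕ →₀ ℕ) : List ℕ := (Finsupp.toMultiset f).sort (· ≤ ·)

lemma slist_coe (f : ℕ →₀ ℕ) : (slist f : Multiset ℕ) = Finsupp.toMultiset f :=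
  Multiset.sort_eq _ _

lemma slist_length {n : ℕ} (f : ℕ →₀ ℕ) (hf : f.sum (fun _ m => m) = n) :
    (slist f).length = n := by
  have : ((slist f : Multiset ℕ)).card = n := by
    rw [slist_coe, Finsupp.card_toMultiset]; exact hf
  simpa using this

lemma summable_S (β : ℝ) (E : ℕ → ℝ)
    (hsum : Summable fun j => Real.exp (-β * E j)) (n : ℕ) :
    Summable (fun f : {f : ℕ →₀ ℕ // f.sum (fun _ m => m) = n} => wgt β E f.1) := by
  set r : ℕ → ℝ := fun a => Real.exp (-β * E a) with hr
  have hg := summable_pi r (fun a => (Real.exp_pos _).le) hsum n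
  set ι : {f : ℕ →₀ ℕ // f.sum (fun _ m => m) = n} → (Fin n → ℕ) :=
    fun F i => (slist F.1).getD i 0 with hι
  have hinj : Function.Injective ι := by
    intro F F' h
    have hl := list_inj (slist F.1) (slist F'.1) n (slist_length _ F.2)
      (slist_length _ F'.2) (fun i => congrFun h i)
    have heq : Finsupp.toMultiset F.1 = Finsupp.toMultiset F'.1 := by
      rw [← slist_coe, ← slist_coe, hl]
    have h2 : Multiset.toFinsupp (Finsupp.toMultiset F.1)
        = Multiset.toFinsupp (Finsupp.toMultiset F'.1) := by rw [heq]
    classical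
    rw [Finsupp.toMultiset_toFinsupp, Finsupp.toMultiset_toFinsupp] at h2
    exact Subtype.ext h2
  have key := hg.comp_injective hinj
  have : ((fun v : Fin n → ℕ => ∏ i, r (v i)) ∘ ι)
      = fun F : {f : ℕ →₀ ℕ // f.sum (fun _ m => m) = n} => wgt β E F.1 := by
    funext F
    show ∏ i, r (ι F i) = wgt β E F.1
    rw [wgt_eq_prod, ← slist_coe, Multiset.map_coe, Multiset.prod_coe,
      list_prod_eq (slist F.1) n (slist_length _ F.2) r]
  rwa [this] at key

/-! #### Finsupp bookkeeping -/

lemma sum_erase_add (f : ℕ →₀ ℕ) (k : ℕ) :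
    (f.erase k).sum (fun _ m => m) + f k = f.sum (fun _ m => m) := by
  conv_rhs => rw [← Finsupp.erase_add_single k f]
  rw [Finsupp.sum_add_index' (fun _ => rfl) (fun _ _ _ => rfl),
    Finsupp.sum_single_index rfl]

lemma apply_le_sum (f : ℕ →₀ ℕ) (k : ℕ) : f k ≤ f.sum (fun _ m => m) := by
  rw [← sum_erase_add f k]; exact Nat.le_add_left _ _

lemma sum_add_single (h : ℕ →₀ ℕ) (k j : ℕ) :
    (h + Finsupp.single k j).sum (fun _ m => m) = h.sum (fun _ m => m) + j := by
  rw [Finsupp.sum_add_index' (fun _ => rfl) (fun _ _ _ => rfl),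
    Finsupp.sum_single_index rfl]

lemma wgt_add_single (β : ℝ) (E : ℕ → ℝ) (k j : ℕ) (h : ℕ →₀ ℕ) :
    wgt β E (h + Finsupp.single k j) = Real.exp (-β * E k)^j * wgt β E h := by
  unfold wgt
  rw [Finsupp.sum_add_index' (by simp) (by push_cast; intros; ring),
    Finsupp.sum_single_index (by simp), mul_add, Real.exp_add]
  have : -β * ((j : ℝ) * E k) = (j : ℝ) * (-β * E k) := by ring
  rw [this, Real.exp_nat_mul, mul_comm]

/-! #### The fiber partition -/

noncomputable def Ycan (β : ℝ) (E : ℕ → ℝ) (k m : ℕ) : ℝ :=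
  ∑' h : {h : ℕ →₀ ℕ // h.sum (fun _ i => i) = m ∧ h k = 0}, wgt β E h.1

/-- Equiv between the fiber `{f : S n | f k = c}` (c ≤ n) and `T k (n - c)`. -/
noncomputable def fibEquiv (n k c : ℕ) (hc : c ≤ n) :
    ((fun F : {f : ℕ →₀ ℕ // f.sum (fun _ i => i) = n} => F.1 k) ⁻¹' {c})
      ≃ {h : ℕ →₀ ℕ // h.sum (fun _ i => i) = n - c ∧ h k = 0} where
  toFun F := ⟨F.1.1.erase k, by
      have h1 := sum_erase_add F.1.1 k
      have h2 : F.1.1 k = c := F.2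
      have h3 := F.1.2
      omega, Finsupp.erase_same⟩
  invFun h := ⟨⟨h.1 + Finsupp.single k c, by
      rw [sum_add_single, h.2.1]; omega⟩, by
      show (h.1 + Finsupp.single k c) k = c
      rw [Finsupp.add_apply, h.2.2, Finsupp.single_eq_same, zero_add]⟩
  left_inv F := by
    apply Subtype.ext; apply Subtype.ext
    show F.1.1.erase k + Finsupp.single k c = F.1.1
    have h2 : F.1.1 k = c := F.2
    have h3 : Finsupp.single k c = Finsupp.single k (F.1.1 k) := by rw [h2]
    rw [h3]
    exact Finsupp.erase_add_single k F.1.1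
  right_inv h := by
    apply Subtype.ext
    show (h.1 + Finsupp.single k c).erase k = h.1
    rw [Finsupp.erase_add, Finsupp.erase_single, add_zero,
      Finsupp.erase_of_notMem_support (Finsupp.notMem_support_iff.mpr h.2.2)]

/-- Main decomposition of sums over `S n` by the occupation number of level `k`. -/
lemma decomp (β : ℝ) (E : ℕ → ℝ)
    (hsum : Summable fun j => Real.exp (-β * E j)) (n k : ℕ) (G : ℕ → ℝ) :
    ∑' F : {f : ℕ →₀ ℕ // f.sum (fun _ i => i) = n}, G (F.1 k) * wgt β E F.1
      = ∑ j ∈ Finset.range (n+1),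
          G j * Real.exp (-β * E k)^j * Ycan β E k (n-j) := by
  classical
  set Φ : {f : ℕ →₀ ℕ // f.sum (fun _ i => i) = n} → ℝ :=
    fun F => G (F.1 k) * wgt β E F.1 with hΦ
  have hC : ∀ F : {f : ℕ →₀ ℕ // f.sum (fun _ i => i) = n},
      ‖Φ F‖ ≤ (∑ j ∈ Finset.range (n+1), |G j|) * wgt β E F.1 := by
    intro F
    rw [hΦ, Real.norm_eq_abs, abs_mul, abs_of_pos (wgt_pos β E F.1)]
    apply mul_le_mul_of_nonneg_right _ (wgt_pos β E F.1).le
    exact Finset.single_le_sum (f := fun j => |G j|) (fun j _ => abs_nonneg _)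
      (Finset.mem_range_succ_iff.mpr
        (by have h := apply_le_sum F.1 k; rw [F.2] at h; exact h))
  have hΦsum : Summable Φ :=
    Summable.of_norm_bounded ((summable_S β E hsum n).mul_left _) hC
  have hfib := hΦsum.hasSum.tsum_fiberwise (fun F => F.1 k)
  have htsum : ∑' c : ℕ,
      (∑' F : ((fun F : {f : ℕ →₀ ℕ // f.sum (fun _ i => i) = n} => F.1 k) ⁻¹' {c}), Φ F.1)
      = ∑' F, Φ F := hfib.tsum_eq
  rw [← htsum]
  have hval : ∀ c : ℕ,
      (∑' F : ((fun F : {f : ℕ →₀ ℕ // f.sum (fun _ i => i) = n} => F.1 k) ⁻¹' {c}), Φ F.1)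
      = if c ∈ Finset.range (n+1) then G c * Real.exp (-β * E k)^c * Ycan β E k (n-c)
        else 0 := by
    intro c
    by_cases hc : c ≤ n
    · rw [if_pos (Finset.mem_range_succ_iff.mpr hc)]
      rw [← Equiv.tsum_eq (fibEquiv n k c hc).symm (fun F => Φ F.1)]
      have : ∀ h : {h : ℕ →₀ ℕ // h.sum (fun _ i => i) = n - c ∧ h k = 0},
          Φ ((fibEquiv n k c hc).symm h).1
            = G c * Real.exp (-β * E k)^c * wgt β E h.1 := by
        intro h
        show G ((h.1 + Finsupp.single k c) k) * wgt β E (h.1 + Finsupp.single k c) = _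
        rw [Finsupp.add_apply, h.2.2, Finsupp.single_eq_same, zero_add,
          wgt_add_single]
        ring
      rw [tsum_congr this, tsum_mul_left]
      rfl
    · rw [if_neg (by simpa using hc)]
      have : IsEmpty ((fun F : {f : ℕ →₀ ℕ // f.sum (fun _ i => i) = n} => F.1 k) ⁻¹' {c}) := by
        constructor
        rintro ⟨F, hF⟩
        have h1 : F.1 k = c := hF
        have := apply_le_sum F.1 k
        rw [F.2] at this
        omega
      exact tsum_empty
  rw [tsum_congr hval]
  rw [tsum_eq_sum (s := Finset.range (n+1)) (fun c hc => if_neg hc)]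
  exact Finset.sum_congr rfl fun c hc => if_pos hc

/-- Canonical partition function of the perfect Bose gas: the sum over occupation
sequences (finitely supported functions ℕ → ℕ) with total particle number n of the
Boltzmann weight exp(-β Σ_k n_k E_k). -/
noncomputable def Zcan (β : ℝ) (E : ℕ → ℝ) (n : ℕ) : ℝ :=
  ∑' f : {f : ℕ →₀ ℕ // f.sum (fun _ m => m) = n},
    Real.exp (-β * (f : ℕ →₀ ℕ).sum (fun k m => (m : ℝ) * E k))
/-- Canonical expectation of g(N_k) in the n-particle perfect Bose gas. -/
noncomputable def canExp (β : ℝ) (E : ℕ → ℝ) (n k : ℕ) (g : ℕ → ℝ) : ℝ :=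
  (Zcan β E n)⁻¹ * ∑' f : {f : ℕ →₀ ℕ // f.sum (fun _ m => m) = n},
    g ((f : ℕ →₀ ℕ) k) * Real.exp (-β * (f : ℕ →₀ ℕ).sum (fun j m => (m : ℝ) * E j))

lemma Zcan_eq_tsum_wgt (β : ℝ) (E : ℕ → ℝ) (n : ℕ) :
    Zcan β E n = ∑' f : {f : ℕ →₀ ℕ // f.sum (fun _ i => i) = n}, wgt β E f.1 := rfl

lemma Zcan_eq (β : ℝ) (E : ℕ → ℝ)
    (hsum : Summable fun j => Real.exp (-β * E j)) (k m : ℕ) :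
    Zcan β E m = ∑ i ∈ Finset.range (m+1),
      Real.exp (-β * E k)^i * Ycan β E k (m-i) := by
  have h := decomp β E hsum m k (fun _ => 1)
  simp only [one_mul] at h
  rw [Zcan_eq_tsum_wgt, h]

lemma Zcan_pos (β : ℝ) (E : ℕ → ℝ)
    (hsum : Summable fun j => Real.exp (-β * E j)) (n : ℕ) :
    0 < Zcan β E n := by
  rw [Zcan_eq_tsum_wgt]
  exact Summable.tsum_pos (summable_S β E hsum n) (fun F => (wgt_pos β E F.1).le)
    ⟨Finsupp.single 0 n, Finsupp.sum_single_index rfl⟩ (wgt_pos β E _)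

/-- The canonical Laplace transform identity for the occupation number of level k. -/
theorem canExp_laplace_identity (β : ℝ) (E : ℕ → ℝ) (hβ : 0 < β)
    (hE0 : 0 < E 0) (hE01 : E 0 < E 1) (hEmono : Monotone E)
    (hsum : Summable fun k => Real.exp (-β * E k)) (n k : ℕ) (lam : ℝ) :
    canExp β E n k (fun m => Real.exp (-lam * m)) =
      Real.exp lam - (Real.exp lam - 1) * (Zcan β E n)⁻¹ *
        ∑ m ∈ Finset.range (n + 1),
          Real.exp (-(β * E k + lam) * ((n : ℝ) - (m : ℝ))) * Zcan β E m := by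
  classical
  set A : ℝ := Real.exp (-β * E k) with hA
  set q : ℝ := Real.exp (-(β * E k + lam)) with hq
  set el : ℝ := Real.exp lam with hel
  have hqel : A = q * el := by
    rw [hA, hq, hel, ← Real.exp_add]; ring_nf
  -- numerator
  have hnum : (∑' F : {f : ℕ →₀ ℕ // f.sum (fun _ i => i) = n},
        Real.exp (-lam * (F.1 k)) * wgt β E F.1)
      = ∑ j ∈ Finset.range (n+1), q^j * Ycan β E k (n-j) := by
    rw [decomp β E hsum n k (fun m => Real.exp (-lam * m))]
    refine Finset.sum_congr rfl fun j _ => ?_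
    have h1 : Real.exp (-lam * (j : ℕ)) = Real.exp (-lam)^j := by
      rw [← Real.exp_nat_mul]; ring_nf
    rw [h1, ← mul_pow, ← Real.exp_add, hq]
    congr 3
    ring1
  -- RHS sum rewriting
  have hrhs : (∑ m ∈ Finset.range (n + 1),
        Real.exp (-(β * E k + lam) * ((n : ℝ) - (m : ℝ))) * Zcan β E m)
      = ∑ m ∈ Finset.range (n + 1), q^(n-m) * Zcan β E m := by
    refine Finset.sum_congr rfl fun m hm => ?_
    have hmn : m ≤ n := Finset.mem_range_succ_iff.mp hm
    have hcast : (n : ℝ) - (m : ℝ) = ((n - m : ℕ) : ℝ) := by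
      rw [Nat.cast_sub hmn]
    rw [hcast, hq, mul_comm (-(β * E k + lam)) _, Real.exp_nat_mul]
  -- algebraic identity
  have key := alg (Ycan β E k) A q el hqel n
  have hZ : ∀ m, Zcan β E m
      = ∑ i ∈ Finset.range (m+1), A^i * Ycan β E k (m-i) := fun m => Zcan_eq β E hsum k m
  have hnum2 : (∑' F : {f : ℕ →₀ ℕ // f.sum (fun _ i => i) = n},
        Real.exp (-lam * (F.1 k)) * wgt β E F.1)
      = el * Zcan β E n - (el - 1) * ∑ m ∈ Finset.range (n+1), q^(n-m) * Zcan β E m := by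
    rw [hnum, key, ← hZ n]
    have hT : (∑ m ∈ Finset.range (n+1),
        q^(n-m) * ∑ i ∈ Finset.range (m+1), A^i * Ycan β E k (m-i))
        = ∑ m ∈ Finset.range (n+1), q^(n-m) * Zcan β E m :=
      Finset.sum_congr rfl fun m _ => by rw [← hZ m]
    rw [hT]
  have hZpos := Zcan_pos β E hsum n
  have hZne : Zcan β E n ≠ 0 := hZpos.ne'
  show (Zcan β E n)⁻¹ * _ = _
  rw [hrhs]
  rw [show (∑' f : {f : ℕ →₀ ℕ // f.sum (fun _ m => m) = n},
      Real.exp (-lam * ((f : ℕ →₀ ℕ) k)) *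
        Real.exp (-β * (f : ℕ →₀ ℕ).sum (fun j m => (m : ℝ) * E j)))
    = el * Zcan β E n - (el - 1) * ∑ m ∈ Finset.range (n+1), q^(n-m) * Zcan β E m
    from hnum2]
  field_simp
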